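/- Let F be a field, ≺ a degree-compatible term order on monomials of F[x_1,...,x_n], P ∈ F[x_1,...,x_n], F a finite subset of F^n, and h ∈ F^n \ F. Set T := F ∪ {h}. Suppose P(h) ≠ 0 and P vanishes on F. Let y be the unique monomial in Sm(≺, T) \ Sm(≺, F) (standard monomials of the vanishing ideals). Then deg(P) ≥ deg(y). -/

import Mathlib

open MvPolynomial

/-- The set of polynomials vanishing on `S` (the vanishing ideal, as a set). -/
def vanishingOn {σ F : Type*} [CommSemiring F] (S : Set (σ → F)) :
    Set (MvPolynomial σ F) :=
  {f | ∀ x ∈ S, MvPolynomial.eval x f = 0}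

/-- `u` is the leading monomial of `f` with respect to the term order `m`. -/
def IsLeadingMonomial {σ F : Type*} [CommSemiring F] (m : MonomialOrder σ)
    (f : MvPolynomial σ F) (u : σ →₀ ℕ) : Prop :=
  u ∈ f.support ∧ ∀ v ∈ f.support, m.toSyn v ≤ m.toSyn u

/-- `u` is a standard monomial of the vanishing ideal of `S` with respect to `m`. -/
def IsStandard {σ F : Type*} [CommSemiring F] (m : MonomialOrder σ)
    (S : Set (σ → F)) (u : σ →₀ ℕ) : Prop :=
  ¬ ∃ f ∈ vanishingOn S, IsLeadingMonomial m f u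

/-- `m` is a degree-compatible term order. -/
def DegCompatible {σ : Type*} (m : MonomialOrder σ) : Prop :=
  ∀ u v : σ →₀ ℕ, u.degree < v.degree → m.toSyn u < m.toSyn v

/-- If `P` vanishes on a finite set `S` but not at `h ∉ S`, and `y` is the unique standard
monomial of `I(S ∪ {h})` which is not a standard monomial of `I(S)` (w.r.t. a
degree-compatible term order), then `deg P ≥ deg y`. -/
theorem stmt9 {n : ℕ} {F : Type*} [Field F]
    (m : MonomialOrder (Fin n)) (hm : DegCompatible m)
    (P : MvPolynomial (Fin n) F)
    (S : Set (Fin n → F)) (hS : S.Finite) (h : Fin n → F) (hh : h ∉ S)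
    (hPh : eval h P ≠ 0) (hPS : ∀ x ∈ S, eval x P = 0)
    (y : Fin n →₀ ℕ)
    (hy : IsStandard m (S ∪ {h}) y) (hy' : ¬ IsStandard m S y) :
    y.degree ≤ P.totalDegree := by
  by_contra hlt
  push_neg at hlt
  rw [IsStandard, not_not] at hy'
  obtain ⟨f, hfS, hfy, hfmax⟩ := hy'
  -- f(h) ≠ 0, else f contradicts hy
  have hfh : eval h f ≠ 0 := by
    intro h0
    exact hy ⟨f, fun x hx => hx.elim (hfS x) (fun hx => hx ▸ h0), hfy, hfmax⟩
  set c : F := eval h f / eval h P with hc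
  set g : MvPolynomial (Fin n) F := f - C c * P with hg
  have hPy : coeff y P = 0 := by
    by_contra h0
    exact absurd (le_totalDegree (mem_support_iff.mpr h0)) (by
      simpa [Finsupp.degree_apply, Finsupp.sum] using not_le.mpr hlt)
  have hgy : coeff y g = coeff y f := by
    simp [hg, coeff_C_mul, hPy]
  apply hy
  refine ⟨g, ?_, ?_, ?_⟩
  · intro x hx
    rcases hx with hx | hx
    · simp [hg, hfS x hx, hPS x hx]
    · simp only [Set.mem_singleton_iff] at hx
      subst hx
      simp [hg, hc, div_mul_cancel₀ _ hPh]
  · rw [mem_support_iff, hgy]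
    exact mem_support_iff.mp hfy
  · intro v hv
    rw [mem_support_iff, hg] at hv
    simp only [coeff_sub, coeff_C_mul] at hv
    by_cases hvf : v ∈ f.support
    · exact hfmax v hvf
    · have hPv : coeff v P ≠ 0 := by
        intro h0
        rw [mem_support_iff, not_not] at hvf
        simp [hvf, h0] at hv
      have : v.degree ≤ P.totalDegree := by
        simpa [Finsupp.degree_apply, Finsupp.sum] using le_totalDegree (mem_support_iff.mpr hPv)
      exact (hm v y (lt_of_le_of_lt this hlt)).le
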